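/- Let u, b : ℝ³ → ℝ³ be smooth rapidly decaying divergence-free fields. Then ∫_{ℝ³} [(u·∇)u·Δu − (b·∇)b·Δu + (u·∇)b·Δb − (b·∇)u·Δb] dx ≤ C ∫_{ℝ³} (|∇_h u| + |∇_h b|)(|∇u|² + |∇b|²) dx, for a universal constant C, where ∇_h = (∂₁, ∂₂, 0). -/

import Mathlib

open MeasureTheory SchwartzMap

noncomputable def pd (i : Fin 3) (f : EuclideanSpace ℝ (Fin 3) → ℝ)
    (x : EuclideanSpace ℝ (Fin 3)) : ℝ :=
  fderiv ℝ f x (EuclideanSpace.single i 1)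

noncomputable def lap (f : EuclideanSpace ℝ (Fin 3) → ℝ)
    (x : EuclideanSpace ℝ (Fin 3)) : ℝ :=
  ∑ i : Fin 3, pd i (pd i f) x

namespace Stmt13Aux

abbrev E3 : Type := EuclideanSpace ℝ (Fin 3)
abbrev S3 : Type := 𝓢(E3, ℝ)

noncomputable def ee (i : Fin 3) : E3 := EuclideanSpace.single i 1

noncomputable def Dd (i : Fin 3) (f : S3) : S3 := LineDeriv.lineDerivOpCLM ℝ S3 (ee i) f

lemma Dd_apply (i : Fin 3) (f : S3) (x : E3) : Dd i f x = fderiv ℝ f x (ee i) := by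
  simp [Dd, LineDeriv.lineDerivOpCLM_apply, SchwartzMap.lineDerivOp_apply_eq_fderiv]

lemma pd_coe (i : Fin 3) (f : S3) : pd i (⇑f) = ⇑(Dd i f) := by
  funext x; simp [pd, Dd_apply, ee]

-- integrability of products
lemma int2 (f g : S3) : Integrable (fun x => f x * g x) := by
  have := MeasureTheory.Integrable.bdd_mul (f := ⇑f) (g := ⇑g)
    (g.integrable (μ := volume)) (f.continuous.aestronglyMeasurable)
    (Filter.Eventually.of_forall fun x => SchwartzMap.norm_le_seminorm ℝ f x)
  exact this

lemma int3 (f g h : S3) : Integrable (fun x => f x * g x * h x) := by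
  have hb : ∀ x, ‖f x * g x‖ ≤ (SchwartzMap.seminorm ℝ 0 0) f * (SchwartzMap.seminorm ℝ 0 0) g := by
    intro x
    rw [norm_mul]
    exact mul_le_mul (SchwartzMap.norm_le_seminorm ℝ f x) (SchwartzMap.norm_le_seminorm ℝ g x)
      (norm_nonneg _) (apply_nonneg _ _)
  have := MeasureTheory.Integrable.bdd_mul (f := fun x => f x * g x) (g := ⇑h)
    (h.integrable (μ := volume)) ((f.continuous.mul g.continuous).aestronglyMeasurable)
    (Filter.Eventually.of_forall hb)
  exact this


lemma ibp3 (f g h : S3) (i : Fin 3) :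
    ∫ x, f x * g x * (Dd i h) x =
      -∫ x, ((Dd i f) x * g x + f x * (Dd i g) x) * h x := by
  have hd : ∀ x : E3, fderiv ℝ (fun y => f y * g y) x (ee i) =
      Dd i f x * g x + f x * Dd i g x := by
    intro x
    rw [fderiv_fun_mul f.differentiableAt g.differentiableAt]
    simp [Dd_apply]
    ring
  have h1 : Integrable (fun x => fderiv ℝ (fun y => f y * g y) x (ee i) * h x) := by
    have : (fun x => fderiv ℝ (fun y => f y * g y) x (ee i) * h x)
        = fun x => Dd i f x * g x * h x + f x * Dd i g x * h x := by
      funext x; rw [hd x]; ring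
    rw [this]
    exact (int3 (Dd i f) g h).add (int3 f (Dd i g) h)
  have h2 : Integrable (fun x => (f x * g x) * fderiv ℝ (⇑h) x (ee i)) := by
    have : (fun x => (f x * g x) * fderiv ℝ (⇑h) x (ee i))
        = fun x => f x * g x * Dd i h x := by
      funext x; rw [Dd_apply]
    rw [this]; exact int3 f g (Dd i h)
  have h3 : Integrable (fun x => (f x * g x) * h x) := int3 f g h
  have key := integral_mul_fderiv_eq_neg_fderiv_mul_of_integrable h1 h2 h3
    (fun x _ => (f.differentiable.mul g.differentiable) x) (fun x _ => h.differentiable x)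
  calc ∫ x, f x * g x * (Dd i h) x
      = ∫ x, (f x * g x) * fderiv ℝ (⇑h) x (ee i) := by
        apply integral_congr_ae; filter_upwards with x; rw [Dd_apply]
    _ = -∫ x, fderiv ℝ (fun y => f y * g y) x (ee i) * h x := key
    _ = -∫ x, ((Dd i f) x * g x + f x * (Dd i g) x) * h x := by
        congr 1; apply integral_congr_ae; filter_upwards with x; rw [hd x]

lemma coe_Dd (i : Fin 3) (f : S3) : ⇑(Dd i f) = fun y => fderiv ℝ (⇑f) y (ee i) :=
  funext fun y => Dd_apply i f y

lemma Dsymm (f : S3) (i k : Fin 3) (x : E3) : Dd k (Dd i f) x = Dd i (Dd k f) x := by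
  have hsym : IsSymmSndFDerivAt ℝ (⇑f) x :=
    (f.smooth 2).contDiffAt.isSymmSndFDerivAt (by simp)
  have hc : ContDiff ℝ 1 (fderiv ℝ (⇑f)) :=
    (f.smooth 2).fderiv_right (m := 1) (by norm_cast)
  have key : ∀ v w : E3, fderiv ℝ (fun y => fderiv ℝ (⇑f) y v) x w
      = fderiv ℝ (fderiv ℝ (⇑f)) x w v := by
    intro v w
    have := fderiv_clm_apply (x := x) (c := fderiv ℝ (⇑f)) (u := fun _ => v)
      (hc.differentiable one_ne_zero).differentiableAt (differentiableAt_const v)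
    rw [this]
    simp
  have e1 : Dd k (Dd i f) x = fderiv ℝ (fun y => fderiv ℝ (⇑f) y (ee i)) x (ee k) := by
    rw [Dd_apply, coe_Dd]
  have e2 : Dd i (Dd k f) x = fderiv ℝ (fun y => fderiv ℝ (⇑f) y (ee k)) x (ee i) := by
    rw [Dd_apply, coe_Dd]
  rw [e1, e2, key, key, hsym (ee k) (ee i)]

lemma cancel (v : Fin 3 → S3) (hv : ∀ x, ∑ i : Fin 3, pd i (⇑(v i)) x = 0) (h h' : S3) :
    ((∑ i : Fin 3, ∫ x, v i x * Dd i h x * h' x) +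
      ∑ i : Fin 3, ∫ x, v i x * Dd i h' x * h x) = 0 := by
  have step : ∀ i : Fin 3, ∫ x, v i x * Dd i h x * h' x =
      -((∫ x, Dd i (v i) x * h' x * h x) + ∫ x, v i x * Dd i h' x * h x) := by
    intro i
    have e1 : ∫ x, v i x * Dd i h x * h' x = ∫ x, v i x * h' x * Dd i h x := by
      apply integral_congr_ae; filter_upwards with x; ring
    rw [e1, ibp3 (v i) h' h i]
    congr 1
    rw [← integral_add (int3 (Dd i (v i)) h' h) (int3 (v i) (Dd i h') h)]
    apply integral_congr_ae; filter_upwards with x; ring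
  have hdiv : (∑ i : Fin 3, ∫ x, Dd i (v i) x * h' x * h x) = 0 := by
    rw [← integral_finset_sum _ (fun i _ => int3 (Dd i (v i)) h' h)]
    have : ∀ x : E3, (∑ i : Fin 3, Dd i (v i) x * h' x * h x) = 0 := by
      intro x
      have h0 : (∑ i : Fin 3, Dd i (v i) x) = 0 := by
        rw [show (∑ i : Fin 3, Dd i (v i) x) = ∑ i : Fin 3, pd i (⇑(v i)) x from
          Finset.sum_congr rfl fun i _ => by rw [pd_coe]]
        exact hv x
      calc (∑ i : Fin 3, Dd i (v i) x * h' x * h x)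
          = (∑ i : Fin 3, Dd i (v i) x) * (h' x * h x) := by
            rw [Finset.sum_mul]; exact Finset.sum_congr rfl fun i _ => by ring
        _ = 0 := by rw [h0]; ring
    simp only [this, integral_zero]
  calc ((∑ i : Fin 3, ∫ x, v i x * Dd i h x * h' x) +
        ∑ i : Fin 3, ∫ x, v i x * Dd i h' x * h x)
      = (∑ i : Fin 3, (-((∫ x, Dd i (v i) x * h' x * h x) +
          ∫ x, v i x * Dd i h' x * h x))) + ∑ i : Fin 3, ∫ x, v i x * Dd i h' x * h x := by
        rw [Finset.sum_congr rfl fun i _ => step i]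
    _ = -(∑ i : Fin 3, ∫ x, Dd i (v i) x * h' x * h x) := by
        rw [Finset.sum_neg_distrib, Finset.sum_add_distrib]; ring
    _ = 0 := by rw [hdiv, neg_zero]

lemma Istep (v f g : S3) (i k : Fin 3) :
    ∫ x, v x * Dd i f x * Dd k (Dd k g) x
      = -(∫ x, Dd k v x * Dd i f x * Dd k g x)
        - ∫ x, v x * Dd i (Dd k f) x * Dd k g x := by
  rw [ibp3 v (Dd i f) (Dd k g) k]
  have e1 : ∫ x, (Dd k v x * Dd i f x + v x * Dd k (Dd i f) x) * Dd k g x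
      = (∫ x, Dd k v x * Dd i f x * Dd k g x)
        + ∫ x, v x * Dd i (Dd k f) x * Dd k g x := by
    rw [← integral_add (int3 (Dd k v) (Dd i f) (Dd k g)) (int3 v (Dd i (Dd k f)) (Dd k g))]
    apply integral_congr_ae; filter_upwards with x
    rw [Dsymm f i k]; ring
  rw [e1]; ring

lemma JK (v : Fin 3 → S3) (hv : ∀ x, ∑ i : Fin 3, pd i (⇑(v i)) x = 0)
    (f g : S3) (k : Fin 3) :
    ((∑ i : Fin 3, ∫ x, v i x * Dd i f x * Dd k (Dd k g) x) +
      ∑ i : Fin 3, ∫ x, v i x * Dd i g x * Dd k (Dd k f) x)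
    = -(∑ i : Fin 3, ∫ x, Dd k (v i) x * Dd i f x * Dd k g x)
      - ∑ i : Fin 3, ∫ x, Dd k (v i) x * Dd i g x * Dd k f x := by
  have h1 : ∀ i : Fin 3, ∫ x, v i x * Dd i f x * Dd k (Dd k g) x
      = -(∫ x, Dd k (v i) x * Dd i f x * Dd k g x)
        - ∫ x, v i x * Dd i (Dd k f) x * Dd k g x := fun i => Istep (v i) f g i k
  have h2 : ∀ i : Fin 3, ∫ x, v i x * Dd i g x * Dd k (Dd k f) x
      = -(∫ x, Dd k (v i) x * Dd i g x * Dd k f x)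
        - ∫ x, v i x * Dd i (Dd k g) x * Dd k f x := fun i => Istep (v i) g f i k
  have hc := cancel v hv (Dd k f) (Dd k g)
  rw [Finset.sum_congr rfl fun i _ => h1 i, Finset.sum_congr rfl fun i _ => h2 i]
  simp only [Finset.sum_sub_distrib, Finset.sum_neg_distrib]
  linarith [hc]

lemma abs_mul_le_of_sq {a b G : ℝ} (ha : a ^ 2 ≤ G) (hb : b ^ 2 ≤ G) : |a * b| ≤ G := by
  rw [abs_mul]
  nlinarith [sq_abs a, sq_abs b, abs_nonneg a, abs_nonneg b, sq_nonneg (|a| - |b|)]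

lemma term_bound (H G : ℝ) (hH : 0 ≤ H) (p q r : Fin 3 → Fin 3 → ℝ)
    (hp2 : |p 2 2| ≤ 2 * H)
    (hph : ∀ k : Fin 3, k ≠ 2 → ∀ i, |p k i| ≤ H)
    (hqh : ∀ i : Fin 3, i ≠ 2 → ∀ j, |q i j| ≤ H)
    (hpG : ∀ k i, (p k i) ^ 2 ≤ G) (hqG : ∀ k i, (q k i) ^ 2 ≤ G)
    (hrG : ∀ k i, (r k i) ^ 2 ≤ G)
    (i j k : Fin 3) : |p k i * q i j * r k j| ≤ 2 * (H * G) := by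
  have hG : 0 ≤ G := le_trans (sq_nonneg _) (hpG 0 0)
  by_cases hk : k = (2 : Fin 3)
  · by_cases hi : i = (2 : Fin 3)
    · subst hk; subst hi
      have h1 : |q 2 j * r 2 j| ≤ G := abs_mul_le_of_sq (hqG _ _) (hrG _ _)
      calc |p 2 2 * q 2 j * r 2 j| = |p 2 2| * |q 2 j * r 2 j| := by
            rw [mul_assoc, abs_mul]
        _ ≤ (2 * H) * G := mul_le_mul hp2 h1 (abs_nonneg _) (by positivity)
        _ = 2 * (H * G) := by ring
    · subst hk
      have h1 : |p 2 i * r 2 j| ≤ G := abs_mul_le_of_sq (hpG _ _) (hrG _ _)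
      have h2 : |q i j| ≤ H := hqh i hi j
      calc |p 2 i * q i j * r 2 j| = |q i j| * |p 2 i * r 2 j| := by
            rw [show p 2 i * q i j * r 2 j = q i j * (p 2 i * r 2 j) from by ring, abs_mul]
        _ ≤ H * G := mul_le_mul h2 h1 (abs_nonneg _) hH
        _ ≤ 2 * (H * G) := by nlinarith
  · have h1 : |p k i| ≤ H := hph k hk i
    have h2 : |q i j * r k j| ≤ G := abs_mul_le_of_sq (hqG _ _) (hrG _ _)
    calc |p k i * q i j * r k j| = |p k i| * |q i j * r k j| := by rw [mul_assoc, abs_mul]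
      _ ≤ H * G := mul_le_mul h1 h2 (abs_nonneg _) hH
      _ ≤ 2 * (H * G) := by nlinarith

lemma matrix_bound (p b' : Fin 3 → Fin 3 → ℝ)
    (hpdiv : p 0 0 + p 1 1 + p 2 2 = 0) (hbdiv : b' 0 0 + b' 1 1 + b' 2 2 = 0) :
    (∑ j : Fin 3, ∑ k : Fin 3, ∑ i : Fin 3,
        (-(p k i * p i j * p k j) + b' k i * b' i j * p k j
          - p k i * b' i j * b' k j + b' k i * p i j * b' k j)) ≤
      216 * ((Real.sqrt (∑ k : Fin 2, ∑ j : Fin 3, p k.castSucc j ^ 2) +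
          Real.sqrt (∑ k : Fin 2, ∑ j : Fin 3, b' k.castSucc j ^ 2)) *
        ((∑ i : Fin 3, ∑ j : Fin 3, p i j ^ 2) + ∑ i : Fin 3, ∑ j : Fin 3, b' i j ^ 2)) := by
  set Ha := Real.sqrt (∑ k : Fin 2, ∑ j : Fin 3, p k.castSucc j ^ 2) with hHa
  set Hb := Real.sqrt (∑ k : Fin 2, ∑ j : Fin 3, b' k.castSucc j ^ 2) with hHb
  set G := (∑ i : Fin 3, ∑ j : Fin 3, p i j ^ 2) + ∑ i : Fin 3, ∑ j : Fin 3, b' i j ^ 2 with hG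
  have hHa0 : 0 ≤ Ha := Real.sqrt_nonneg _
  have hHb0 : 0 ≤ Hb := Real.sqrt_nonneg _
  set H := Ha + Hb with hHdef
  have hH0 : 0 ≤ H := by positivity
  have hG0 : 0 ≤ G := by positivity
  -- squared entry bounds
  have hpG : ∀ k i : Fin 3, (p k i) ^ 2 ≤ G := by
    intro k i
    calc (p k i) ^ 2 ≤ ∑ j : Fin 3, p k j ^ 2 :=
          Finset.single_le_sum (f := fun j => p k j ^ 2) (fun j _ => sq_nonneg _)
            (Finset.mem_univ i)
      _ ≤ ∑ k' : Fin 3, ∑ j : Fin 3, p k' j ^ 2 :=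
          Finset.single_le_sum (f := fun k' => ∑ j : Fin 3, p k' j ^ 2)
            (fun _ _ => by positivity) (Finset.mem_univ k)
      _ ≤ G := le_add_of_nonneg_right (by positivity)
  have hbG : ∀ k i : Fin 3, (b' k i) ^ 2 ≤ G := by
    intro k i
    have : (b' k i) ^ 2 ≤ ∑ k' : Fin 3, ∑ j : Fin 3, b' k' j ^ 2 :=
      le_trans (Finset.single_le_sum (f := fun j => b' k j ^ 2) (fun j _ => sq_nonneg _)
        (Finset.mem_univ i))
        (Finset.single_le_sum (f := fun k' => ∑ j : Fin 3, b' k' j ^ 2)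
          (fun _ _ => by positivity) (Finset.mem_univ k))
    rw [hG]; linarith [Finset.sum_nonneg (fun (i : Fin 3) (_ : i ∈ Finset.univ) =>
      Finset.sum_nonneg (fun (j : Fin 3) (_ : j ∈ Finset.univ) => sq_nonneg (p i j)))]
  -- horizontal bounds
  have hhoriz : ∀ (q : Fin 3 → Fin 3 → ℝ) (k' : Fin 2) (i : Fin 3),
      |q k'.castSucc i| ≤ Real.sqrt (∑ k : Fin 2, ∑ j : Fin 3, q k.castSucc j ^ 2) := by
    intro q k' i
    rw [← Real.sqrt_sq_eq_abs]
    apply Real.sqrt_le_sqrt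
    calc (q k'.castSucc i) ^ 2 ≤ ∑ j : Fin 3, q k'.castSucc j ^ 2 :=
          Finset.single_le_sum (f := fun j => q k'.castSucc j ^ 2) (fun j _ => sq_nonneg _)
            (Finset.mem_univ i)
      _ ≤ ∑ k : Fin 2, ∑ j : Fin 3, q k.castSucc j ^ 2 :=
          Finset.single_le_sum (f := fun k : Fin 2 => ∑ j : Fin 3, q k.castSucc j ^ 2)
            (fun _ _ => by positivity) (Finset.mem_univ k')
  have hph : ∀ k : Fin 3, k ≠ 2 → ∀ i, |p k i| ≤ H := by
    intro k hk i
    obtain ⟨k', hk'⟩ : ∃ k' : Fin 2, k'.castSucc = k := by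
      fin_cases k
      · exact ⟨0, by decide⟩
      · exact ⟨1, by decide⟩
      · exact absurd rfl hk
    rw [← hk']
    exact le_trans (hhoriz p k' i) (by rw [hHdef, ← hHa]; linarith)
  have hbh : ∀ k : Fin 3, k ≠ 2 → ∀ i, |b' k i| ≤ H := by
    intro k hk i
    obtain ⟨k', hk'⟩ : ∃ k' : Fin 2, k'.castSucc = k := by
      fin_cases k
      · exact ⟨0, by decide⟩
      · exact ⟨1, by decide⟩
      · exact absurd rfl hk
    rw [← hk']
    exact le_trans (hhoriz b' k' i) (by rw [hHdef, ← hHb]; linarith)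
  have hp2 : |p 2 2| ≤ 2 * H := by
    have e : p 2 2 = -(p 0 0 + p 1 1) := by linarith
    rw [e, abs_neg]
    refine le_trans (abs_add_le _ _) ?_
    have h0 := hph 0 (by decide) 0
    have h1 := hph 1 (by decide) 1
    linarith
  have hb2 : |b' 2 2| ≤ 2 * H := by
    have e : b' 2 2 = -(b' 0 0 + b' 1 1) := by linarith
    rw [e, abs_neg]
    refine le_trans (abs_add_le _ _) ?_
    have h0 := hbh 0 (by decide) 0
    have h1 := hbh 1 (by decide) 1
    linarith
  have cellbound : ∀ j k i : Fin 3,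
      (-(p k i * p i j * p k j) + b' k i * b' i j * p k j
        - p k i * b' i j * b' k j + b' k i * p i j * b' k j) ≤ 8 * (H * G) := by
    intro j k i
    have B1 := term_bound H G hH0 p p p hp2 hph hph hpG hpG hpG i j k
    have B2 := term_bound H G hH0 b' b' p hb2 hbh hbh hbG hbG hpG i j k
    have B3 := term_bound H G hH0 p b' b' hp2 hph hbh hpG hbG hbG i j k
    have B4 := term_bound H G hH0 b' p b' hb2 hbh hph hbG hpG hbG i j k
    have l1 := neg_abs_le (p k i * p i j * p k j)
    have l2 := le_abs_self (b' k i * b' i j * p k j)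
    have l3 := neg_abs_le (p k i * b' i j * b' k j)
    have l4 := le_abs_self (b' k i * p i j * b' k j)
    linarith
  calc (∑ j : Fin 3, ∑ k : Fin 3, ∑ i : Fin 3,
        (-(p k i * p i j * p k j) + b' k i * b' i j * p k j
          - p k i * b' i j * b' k j + b' k i * p i j * b' k j))
      ≤ ∑ j : Fin 3, ∑ k : Fin 3, ∑ i : Fin 3, (8 * (H * G)) := by
        refine Finset.sum_le_sum fun j _ => Finset.sum_le_sum fun k _ =>
          Finset.sum_le_sum fun i _ => cellbound j k i
    _ = 216 * (H * G) := by
        simp [Finset.sum_const]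
        ring
  -- done: rewrite H G
lemma sqrt_le_one_add (t : ℝ) (ht : 0 ≤ t) : Real.sqrt t ≤ 1 + t := by
  nlinarith [Real.sq_sqrt ht, Real.sqrt_nonneg t]

lemma horiz_sum_le (q : Fin 3 → Fin 3 → ℝ) :
    (∑ k : Fin 2, ∑ j : Fin 3, q k.castSucc j ^ 2) ≤ ∑ k : Fin 3, ∑ j : Fin 3, q k j ^ 2 := by
  simp only [Fin.sum_univ_two, Fin.sum_univ_three,
    show ((0 : Fin 2).castSucc) = (0 : Fin 3) from by decide,
    show ((1 : Fin 2).castSucc) = (1 : Fin 3) from by decide]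
  nlinarith [sq_nonneg (q 2 0), sq_nonneg (q 2 1), sq_nonneg (q 2 2)]

end Stmt13Aux

open Stmt13Aux in
/-- There is a universal constant `C` such that for all divergence-free Schwartz fields
`u, b` on `ℝ³`,
`∫ (u·∇)u·Δu − (b·∇)b·Δu + (u·∇)b·Δb − (b·∇)u·Δb
  ≤ C ∫ (|∇_h u| + |∇_h b|)(|∇u|² + |∇b|²)`. -/
theorem stmt_13 : ∃ C : ℝ, 0 < C ∧
    ∀ u b : Fin 3 → 𝓢(EuclideanSpace ℝ (Fin 3), ℝ),
      (∀ x, ∑ i : Fin 3, pd i (u i) x = 0) →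
      (∀ x, ∑ i : Fin 3, pd i (b i) x = 0) →
      (∫ x, ∑ j : Fin 3,
          ((∑ i : Fin 3, u i x * pd i (u j) x) * lap (u j) x -
            (∑ i : Fin 3, b i x * pd i (b j) x) * lap (u j) x +
            (∑ i : Fin 3, u i x * pd i (b j) x) * lap (b j) x -
            (∑ i : Fin 3, b i x * pd i (u j) x) * lap (b j) x)) ≤
        C * ∫ x,
          (Real.sqrt (∑ k : Fin 2, ∑ j : Fin 3, (pd k.castSucc (u j) x) ^ 2) +
            Real.sqrt (∑ k : Fin 2, ∑ j : Fin 3, (pd k.castSucc (b j) x) ^ 2)) *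
          ((∑ i : Fin 3, ∑ j : Fin 3, (pd i (u j) x) ^ 2) +
            ∑ i : Fin 3, ∑ j : Fin 3, (pd i (b j) x) ^ 2) := by
  refine ⟨216, by norm_num, ?_⟩
  intro u b hu hb
  -- Notation for the RHS integrand in Dd form
  set Φ : E3 → ℝ := fun x =>
    (Real.sqrt (∑ k : Fin 2, ∑ j : Fin 3, (Dd k.castSucc (u j) x) ^ 2) +
      Real.sqrt (∑ k : Fin 2, ∑ j : Fin 3, (Dd k.castSucc (b j) x) ^ 2)) *
    ((∑ i : Fin 3, ∑ j : Fin 3, (Dd i (u j) x) ^ 2) +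
      ∑ i : Fin 3, ∑ j : Fin 3, (Dd i (b j) x) ^ 2) with hΦdef
  -- the RHS integrand equals Φ
  have hRHSeq : (fun x =>
      (Real.sqrt (∑ k : Fin 2, ∑ j : Fin 3, (pd k.castSucc (u j) x) ^ 2) +
        Real.sqrt (∑ k : Fin 2, ∑ j : Fin 3, (pd k.castSucc (b j) x) ^ 2)) *
      ((∑ i : Fin 3, ∑ j : Fin 3, (pd i (u j) x) ^ 2) +
        ∑ i : Fin 3, ∑ j : Fin 3, (pd i (b j) x) ^ 2)) = Φ := by
    funext x; simp only [hΦdef, pd_coe]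
  rw [hRHSeq]
  -- R : the integrand after integration by parts
  set R : E3 → ℝ := fun x => ∑ j : Fin 3, ∑ k : Fin 3, ∑ i : Fin 3,
      (-(Dd k (u i) x * Dd i (u j) x * Dd k (u j) x)
        + Dd k (b i) x * Dd i (b j) x * Dd k (u j) x
        - Dd k (u i) x * Dd i (b j) x * Dd k (b j) x
        + Dd k (b i) x * Dd i (u j) x * Dd k (b j) x) with hRdef
  -- Step 1: LHS = ∫ R
  have step1 : (∫ x, ∑ j : Fin 3,
      ((∑ i : Fin 3, u i x * pd i (u j) x) * lap (u j) x -
        (∑ i : Fin 3, b i x * pd i (b j) x) * lap (u j) x +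
        (∑ i : Fin 3, u i x * pd i (b j) x) * lap (b j) x -
        (∑ i : Fin 3, b i x * pd i (u j) x) * lap (b j) x)) = ∫ x, R x := by
    have hsplitT : ∀ j k i : Fin 3,
        (∫ x, (u i x * Dd i (u j) x * Dd k (Dd k (u j)) x - b i x * Dd i (b j) x * Dd k (Dd k (u j)) x + u i x * Dd i (b j) x * Dd k (Dd k (b j)) x - b i x * Dd i (u j) x * Dd k (Dd k (b j)) x))
          = (∫ x, u i x * Dd i (u j) x * Dd k (Dd k (u j)) x) - (∫ x, b i x * Dd i (b j) x * Dd k (Dd k (u j)) x) + (∫ x, u i x * Dd i (b j) x * Dd k (Dd k (b j)) x) - (∫ x, b i x * Dd i (u j) x * Dd k (Dd k (b j)) x) := by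
      intro j k i
      calc ∫ x, (u i x * Dd i (u j) x * Dd k (Dd k (u j)) x - b i x * Dd i (b j) x * Dd k (Dd k (u j)) x + u i x * Dd i (b j) x * Dd k (Dd k (b j)) x - b i x * Dd i (u j) x * Dd k (Dd k (b j)) x)
          = (∫ x, (u i x * Dd i (u j) x * Dd k (Dd k (u j)) x - b i x * Dd i (b j) x * Dd k (Dd k (u j)) x + u i x * Dd i (b j) x * Dd k (Dd k (b j)) x)) - ∫ x, b i x * Dd i (u j) x * Dd k (Dd k (b j)) x :=
            integral_sub (f := fun x => u i x * Dd i (u j) x * Dd k (Dd k (u j)) x - b i x * Dd i (b j) x * Dd k (Dd k (u j)) x + u i x * Dd i (b j) x * Dd k (Dd k (b j)) x) (g := fun x => b i x * Dd i (u j) x * Dd k (Dd k (b j)) x)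
              (((int3 (u i) (Dd i (u j)) (Dd k (Dd k (u j)))).sub (int3 (b i) (Dd i (b j)) (Dd k (Dd k (u j))))).add (int3 (u i) (Dd i (b j)) (Dd k (Dd k (b j))))) (int3 (b i) (Dd i (u j)) (Dd k (Dd k (b j))))
        _ = ((∫ x, (u i x * Dd i (u j) x * Dd k (Dd k (u j)) x - b i x * Dd i (b j) x * Dd k (Dd k (u j)) x)) + ∫ x, u i x * Dd i (b j) x * Dd k (Dd k (b j)) x) - ∫ x, b i x * Dd i (u j) x * Dd k (Dd k (b j)) x := by
            rw [integral_add (f := fun x => u i x * Dd i (u j) x * Dd k (Dd k (u j)) x - b i x * Dd i (b j) x * Dd k (Dd k (u j)) x) (g := fun x => u i x * Dd i (b j) x * Dd k (Dd k (b j)) x)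
              ((int3 (u i) (Dd i (u j)) (Dd k (Dd k (u j)))).sub (int3 (b i) (Dd i (b j)) (Dd k (Dd k (u j))))) (int3 (u i) (Dd i (b j)) (Dd k (Dd k (b j))))]
        _ = (∫ x, u i x * Dd i (u j) x * Dd k (Dd k (u j)) x) - (∫ x, b i x * Dd i (b j) x * Dd k (Dd k (u j)) x) + (∫ x, u i x * Dd i (b j) x * Dd k (Dd k (b j)) x) - (∫ x, b i x * Dd i (u j) x * Dd k (Dd k (b j)) x) := by
            rw [integral_sub (f := fun x => u i x * Dd i (u j) x * Dd k (Dd k (u j)) x) (g := fun x => b i x * Dd i (b j) x * Dd k (Dd k (u j)) x) (int3 (u i) (Dd i (u j)) (Dd k (Dd k (u j)))) (int3 (b i) (Dd i (b j)) (Dd k (Dd k (u j))))]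
    have hsplitP : ∀ j k i : Fin 3,
        (∫ x, (-(Dd k (u i) x * Dd i (u j) x * Dd k (u j) x) + Dd k (b i) x * Dd i (b j) x * Dd k (u j) x - Dd k (u i) x * Dd i (b j) x * Dd k (b j) x + Dd k (b i) x * Dd i (u j) x * Dd k (b j) x))
          = -(∫ x, Dd k (u i) x * Dd i (u j) x * Dd k (u j) x) + (∫ x, Dd k (b i) x * Dd i (b j) x * Dd k (u j) x) - (∫ x, Dd k (u i) x * Dd i (b j) x * Dd k (b j) x) + (∫ x, Dd k (b i) x * Dd i (u j) x * Dd k (b j) x) := by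
      intro j k i
      calc ∫ x, (-(Dd k (u i) x * Dd i (u j) x * Dd k (u j) x) + Dd k (b i) x * Dd i (b j) x * Dd k (u j) x - Dd k (u i) x * Dd i (b j) x * Dd k (b j) x + Dd k (b i) x * Dd i (u j) x * Dd k (b j) x)
          = (∫ x, (-(Dd k (u i) x * Dd i (u j) x * Dd k (u j) x) + Dd k (b i) x * Dd i (b j) x * Dd k (u j) x - Dd k (u i) x * Dd i (b j) x * Dd k (b j) x)) + ∫ x, Dd k (b i) x * Dd i (u j) x * Dd k (b j) x :=
            integral_add (f := fun x => -(Dd k (u i) x * Dd i (u j) x * Dd k (u j) x) + Dd k (b i) x * Dd i (b j) x * Dd k (u j) x - Dd k (u i) x * Dd i (b j) x * Dd k (b j) x) (g := fun x => Dd k (b i) x * Dd i (u j) x * Dd k (b j) x)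
              ((((int3 (Dd k (u i)) (Dd i (u j)) (Dd k (u j))).neg).add (int3 (Dd k (b i)) (Dd i (b j)) (Dd k (u j)))).sub (int3 (Dd k (u i)) (Dd i (b j)) (Dd k (b j)))) (int3 (Dd k (b i)) (Dd i (u j)) (Dd k (b j)))
        _ = ((∫ x, (-(Dd k (u i) x * Dd i (u j) x * Dd k (u j) x) + Dd k (b i) x * Dd i (b j) x * Dd k (u j) x)) - ∫ x, Dd k (u i) x * Dd i (b j) x * Dd k (b j) x) + ∫ x, Dd k (b i) x * Dd i (u j) x * Dd k (b j) x := by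
            rw [integral_sub (f := fun x => -(Dd k (u i) x * Dd i (u j) x * Dd k (u j) x) + Dd k (b i) x * Dd i (b j) x * Dd k (u j) x) (g := fun x => Dd k (u i) x * Dd i (b j) x * Dd k (b j) x)
              (((int3 (Dd k (u i)) (Dd i (u j)) (Dd k (u j))).neg).add (int3 (Dd k (b i)) (Dd i (b j)) (Dd k (u j)))) (int3 (Dd k (u i)) (Dd i (b j)) (Dd k (b j)))]
        _ = ((-(∫ x, Dd k (u i) x * Dd i (u j) x * Dd k (u j) x) + ∫ x, Dd k (b i) x * Dd i (b j) x * Dd k (u j) x) - ∫ x, Dd k (u i) x * Dd i (b j) x * Dd k (b j) x) + ∫ x, Dd k (b i) x * Dd i (u j) x * Dd k (b j) x := by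
            rw [integral_add (f := fun x => -(Dd k (u i) x * Dd i (u j) x * Dd k (u j) x)) (g := fun x => Dd k (b i) x * Dd i (b j) x * Dd k (u j) x)
              ((int3 (Dd k (u i)) (Dd i (u j)) (Dd k (u j))).neg) (int3 (Dd k (b i)) (Dd i (b j)) (Dd k (u j))), integral_neg]
        _ = -(∫ x, Dd k (u i) x * Dd i (u j) x * Dd k (u j) x) + (∫ x, Dd k (b i) x * Dd i (b j) x * Dd k (u j) x) - (∫ x, Dd k (u i) x * Dd i (b j) x * Dd k (b j) x) + (∫ x, Dd k (b i) x * Dd i (u j) x * Dd k (b j) x) := rfl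
    have key1 : ∀ j k : Fin 3,
        (∑ i : Fin 3, ∫ x, u i x * Dd i (u j) x * Dd k (Dd k (u j)) x) = -∑ i : Fin 3, ∫ x, Dd k (u i) x * Dd i (u j) x * Dd k (u j) x := by
      intro j k
      have h := JK u hu (u j) (u j) k
      linarith
    have key3 : ∀ j k : Fin 3,
        (∑ i : Fin 3, ∫ x, u i x * Dd i (b j) x * Dd k (Dd k (b j)) x) = -∑ i : Fin 3, ∫ x, Dd k (u i) x * Dd i (b j) x * Dd k (b j) x := by
      intro j k
      have h := JK u hu (b j) (b j) k
      linarith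
    have key24 : ∀ j k : Fin 3,
        ((∑ i : Fin 3, ∫ x, b i x * Dd i (b j) x * Dd k (Dd k (u j)) x) + ∑ i : Fin 3, ∫ x, b i x * Dd i (u j) x * Dd k (Dd k (b j)) x)
          = -(∑ i : Fin 3, ∫ x, Dd k (b i) x * Dd i (b j) x * Dd k (u j) x) - ∑ i : Fin 3, ∫ x, Dd k (b i) x * Dd i (u j) x * Dd k (b j) x :=
      fun j k => JK b hb (b j) (u j) k
    have hintT : ∀ j k i : Fin 3,
        Integrable (fun x => u i x * Dd i (u j) x * Dd k (Dd k (u j)) x - b i x * Dd i (b j) x * Dd k (Dd k (u j)) x + u i x * Dd i (b j) x * Dd k (Dd k (b j)) x - b i x * Dd i (u j) x * Dd k (Dd k (b j)) x) :=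
      fun j k i => (((int3 (u i) (Dd i (u j)) (Dd k (Dd k (u j)))).sub (int3 (b i) (Dd i (b j)) (Dd k (Dd k (u j))))).add (int3 (u i) (Dd i (b j)) (Dd k (Dd k (b j))))).sub (int3 (b i) (Dd i (u j)) (Dd k (Dd k (b j))))
    have hintP : ∀ j k i : Fin 3,
        Integrable (fun x => -(Dd k (u i) x * Dd i (u j) x * Dd k (u j) x) + Dd k (b i) x * Dd i (b j) x * Dd k (u j) x - Dd k (u i) x * Dd i (b j) x * Dd k (b j) x + Dd k (b i) x * Dd i (u j) x * Dd k (b j) x) :=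
      fun j k i => ((((int3 (Dd k (u i)) (Dd i (u j)) (Dd k (u j))).neg).add (int3 (Dd k (b i)) (Dd i (b j)) (Dd k (u j)))).sub (int3 (Dd k (u i)) (Dd i (b j)) (Dd k (b j)))).add (int3 (Dd k (b i)) (Dd i (u j)) (Dd k (b j)))
    have hpt : ∀ x : EuclideanSpace ℝ (Fin 3), (∑ j : Fin 3,
        ((∑ i : Fin 3, u i x * pd i (u j) x) * lap (u j) x -
          (∑ i : Fin 3, b i x * pd i (b j) x) * lap (u j) x +
          (∑ i : Fin 3, u i x * pd i (b j) x) * lap (b j) x -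
          (∑ i : Fin 3, b i x * pd i (u j) x) * lap (b j) x))
        = ∑ j : Fin 3, ∑ k : Fin 3, ∑ i : Fin 3,
            (u i x * Dd i (u j) x * Dd k (Dd k (u j)) x - b i x * Dd i (b j) x * Dd k (Dd k (u j)) x + u i x * Dd i (b j) x * Dd k (Dd k (b j)) x - b i x * Dd i (u j) x * Dd k (Dd k (b j)) x) := by
      intro x
      have hlap : ∀ f : S3, lap (⇑f) x = ∑ k : Fin 3, Dd k (Dd k f) x := by
        intro f
        rw [show lap (⇑f) x = ∑ i : Fin 3, pd i (pd i (⇑f)) x from rfl]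
        simp only [pd_coe]
      simp only [pd_coe, hlap]
      refine Finset.sum_congr rfl fun j _ => ?_
      simp only [Fin.sum_univ_three]
      ring
    calc (∫ x, ∑ j : Fin 3,
        ((∑ i : Fin 3, u i x * pd i (u j) x) * lap (u j) x -
          (∑ i : Fin 3, b i x * pd i (b j) x) * lap (u j) x +
          (∑ i : Fin 3, u i x * pd i (b j) x) * lap (b j) x -
          (∑ i : Fin 3, b i x * pd i (u j) x) * lap (b j) x))
        = ∫ x, ∑ j : Fin 3, ∑ k : Fin 3, ∑ i : Fin 3,
            (u i x * Dd i (u j) x * Dd k (Dd k (u j)) x - b i x * Dd i (b j) x * Dd k (Dd k (u j)) x + u i x * Dd i (b j) x * Dd k (Dd k (b j)) x - b i x * Dd i (u j) x * Dd k (Dd k (b j)) x) := by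
          apply integral_congr_ae
          filter_upwards with x
          exact hpt x
      _ = ∑ j : Fin 3, ∑ k : Fin 3, ∑ i : Fin 3,
            ∫ x, (u i x * Dd i (u j) x * Dd k (Dd k (u j)) x - b i x * Dd i (b j) x * Dd k (Dd k (u j)) x + u i x * Dd i (b j) x * Dd k (Dd k (b j)) x - b i x * Dd i (u j) x * Dd k (Dd k (b j)) x) := by
          rw [integral_finset_sum _ (fun j _ => integrable_finset_sum _ fun k _ =>
            integrable_finset_sum _ fun i _ => hintT j k i)]
          refine Finset.sum_congr rfl fun j _ => ?_
          rw [integral_finset_sum _ (fun k _ => integrable_finset_sum _ fun i _ => hintT j k i)]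
          refine Finset.sum_congr rfl fun k _ => ?_
          rw [integral_finset_sum _ (fun i _ => hintT j k i)]
      _ = ∑ j : Fin 3, ∑ k : Fin 3, ∑ i : Fin 3,
            ∫ x, (-(Dd k (u i) x * Dd i (u j) x * Dd k (u j) x) + Dd k (b i) x * Dd i (b j) x * Dd k (u j) x - Dd k (u i) x * Dd i (b j) x * Dd k (b j) x + Dd k (b i) x * Dd i (u j) x * Dd k (b j) x) := by
          refine Finset.sum_congr rfl fun j _ => Finset.sum_congr rfl fun k _ => ?_
          have e1 : (∑ i : Fin 3, ∫ x, (u i x * Dd i (u j) x * Dd k (Dd k (u j)) x - b i x * Dd i (b j) x * Dd k (Dd k (u j)) x + u i x * Dd i (b j) x * Dd k (Dd k (b j)) x - b i x * Dd i (u j) x * Dd k (Dd k (b j)) x))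
              = (∑ i : Fin 3, ∫ x, u i x * Dd i (u j) x * Dd k (Dd k (u j)) x) - (∑ i : Fin 3, ∫ x, b i x * Dd i (b j) x * Dd k (Dd k (u j)) x)
                + (∑ i : Fin 3, ∫ x, u i x * Dd i (b j) x * Dd k (Dd k (b j)) x) - (∑ i : Fin 3, ∫ x, b i x * Dd i (u j) x * Dd k (Dd k (b j)) x) := by
            rw [Finset.sum_congr rfl fun i _ => hsplitT j k i]
            rw [Finset.sum_sub_distrib, Finset.sum_add_distrib, Finset.sum_sub_distrib]
          have e2 : (∑ i : Fin 3, ∫ x, (-(Dd k (u i) x * Dd i (u j) x * Dd k (u j) x) + Dd k (b i) x * Dd i (b j) x * Dd k (u j) x - Dd k (u i) x * Dd i (b j) x * Dd k (b j) x + Dd k (b i) x * Dd i (u j) x * Dd k (b j) x))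
              = -(∑ i : Fin 3, ∫ x, Dd k (u i) x * Dd i (u j) x * Dd k (u j) x) + (∑ i : Fin 3, ∫ x, Dd k (b i) x * Dd i (b j) x * Dd k (u j) x)
                - (∑ i : Fin 3, ∫ x, Dd k (u i) x * Dd i (b j) x * Dd k (b j) x) + (∑ i : Fin 3, ∫ x, Dd k (b i) x * Dd i (u j) x * Dd k (b j) x) := by
            rw [Finset.sum_congr rfl fun i _ => hsplitP j k i]
            rw [Finset.sum_add_distrib, Finset.sum_sub_distrib, Finset.sum_add_distrib,
              Finset.sum_neg_distrib]
          rw [e1, e2]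
          have h1 := key1 j k
          have h3 := key3 j k
          have h24 := key24 j k
          linarith
      _ = ∫ x, R x := by
          rw [hRdef]
          rw [integral_finset_sum _ (fun j _ => integrable_finset_sum _ fun k _ =>
            integrable_finset_sum _ fun i _ => hintP j k i)]
          refine Finset.sum_congr rfl fun j _ => ?_
          rw [integral_finset_sum _ (fun k _ => integrable_finset_sum _ fun i _ => hintP j k i)]
          refine Finset.sum_congr rfl fun k _ => ?_
          rw [integral_finset_sum _ (fun i _ => hintP j k i)]
  rw [step1]
  -- Step 2: pointwise bound and integrability
  have hRbound : ∀ x, R x ≤ 216 * Φ x := by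
    intro x
    have hdu : Dd 0 (u 0) x + Dd 1 (u 1) x + Dd 2 (u 2) x = 0 := by
      have := hu x
      rw [Fin.sum_univ_three] at this
      simpa only [pd_coe] using this
    have hdb : Dd 0 (b 0) x + Dd 1 (b 1) x + Dd 2 (b 2) x = 0 := by
      have := hb x
      rw [Fin.sum_univ_three] at this
      simpa only [pd_coe] using this
    have := matrix_bound (fun k i => Dd k (u i) x) (fun k i => Dd k (b i) x) hdu hdb
    simpa only [hRdef, hΦdef, mul_assoc] using this
  have hRint : Integrable R := by
    apply integrable_finset_sum
    intro j _
    apply integrable_finset_sum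
    intro k _
    apply integrable_finset_sum
    intro i _
    exact (((int3 (Dd k (u i)) (Dd i (u j)) (Dd k (u j))).neg.add
      (int3 (Dd k (b i)) (Dd i (b j)) (Dd k (u j)))).sub
      (int3 (Dd k (u i)) (Dd i (b j)) (Dd k (b j)))).add
      (int3 (Dd k (b i)) (Dd i (u j)) (Dd k (b j)))
  -- integrability of Φ
  have hGint : Integrable (fun x => (∑ i : Fin 3, ∑ j : Fin 3, (Dd i (u j) x) ^ 2) +
      ∑ i : Fin 3, ∑ j : Fin 3, (Dd i (b j) x) ^ 2) := by
    apply Integrable.add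
    all_goals
      apply integrable_finset_sum
      intro i _
      apply integrable_finset_sum
      intro j _
      have h2 := int2 (Dd i (u j)) (Dd i (u j))
      have h2' := int2 (Dd i (b j)) (Dd i (b j))
      first
      | · have : (fun x => (Dd i (u j) x) ^ 2) = fun x => Dd i (u j) x * Dd i (u j) x := by
            funext x; ring
          rw [this]; exact h2
      | · have : (fun x => (Dd i (b j) x) ^ 2) = fun x => Dd i (b j) x * Dd i (b j) x := by
            funext x; ring
          rw [this]; exact h2'
  have sq_le_sn : ∀ (g : S3) (x : E3), (g x) ^ 2 ≤ ((SchwartzMap.seminorm ℝ 0 0) g) ^ 2 := by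
    intro g x
    have h := SchwartzMap.norm_le_seminorm ℝ g x
    rw [Real.norm_eq_abs] at h
    nlinarith [sq_abs (g x), abs_nonneg (g x)]
  have contG : Continuous (fun x => (∑ i : Fin 3, ∑ j : Fin 3, (Dd i (u j) x) ^ 2) +
      ∑ i : Fin 3, ∑ j : Fin 3, (Dd i (b j) x) ^ 2) := by
    apply Continuous.add <;>
      exact continuous_finset_sum _ fun i _ => continuous_finset_sum _ fun j _ =>
        (SchwartzMap.continuous _).pow 2
  have hGbdd : ∃ C : ℝ, ∀ x : E3, ‖(∑ i : Fin 3, ∑ j : Fin 3, (Dd i (u j) x) ^ 2) +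
      ∑ i : Fin 3, ∑ j : Fin 3, (Dd i (b j) x) ^ 2‖ ≤ C := by
    refine ⟨(∑ i : Fin 3, ∑ j : Fin 3, ((SchwartzMap.seminorm ℝ 0 0) (Dd i (u j))) ^ 2) +
      ∑ i : Fin 3, ∑ j : Fin 3, ((SchwartzMap.seminorm ℝ 0 0) (Dd i (b j))) ^ 2, fun x => ?_⟩
    rw [Real.norm_eq_abs, abs_of_nonneg (by positivity)]
    refine add_le_add ?_ ?_ <;>
      exact Finset.sum_le_sum fun i _ => Finset.sum_le_sum fun j _ => sq_le_sn _ x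
  have hGG : Integrable (fun x => ((∑ i : Fin 3, ∑ j : Fin 3, (Dd i (u j) x) ^ 2) +
      ∑ i : Fin 3, ∑ j : Fin 3, (Dd i (b j) x) ^ 2) *
      ((∑ i : Fin 3, ∑ j : Fin 3, (Dd i (u j) x) ^ 2) +
        ∑ i : Fin 3, ∑ j : Fin 3, (Dd i (b j) x) ^ 2)) :=
    Integrable.bdd_mul hGint contG.aestronglyMeasurable (Filter.Eventually.of_forall hGbdd.choose_spec)
  have contΦ : Continuous Φ := by
    rw [hΦdef]
    apply Continuous.mul
    · apply Continuous.add <;>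
        exact Real.continuous_sqrt.comp (continuous_finset_sum _ fun k _ =>
          continuous_finset_sum _ fun j _ => (SchwartzMap.continuous _).pow 2)
    · exact contG
  have hΦnonneg : ∀ x, 0 ≤ Φ x := by
    intro x; rw [hΦdef]; positivity
  have hΦle : ∀ x, Φ x ≤ 2 * ((∑ i : Fin 3, ∑ j : Fin 3, (Dd i (u j) x) ^ 2) +
      ∑ i : Fin 3, ∑ j : Fin 3, (Dd i (b j) x) ^ 2) +
      2 * (((∑ i : Fin 3, ∑ j : Fin 3, (Dd i (u j) x) ^ 2) +
        ∑ i : Fin 3, ∑ j : Fin 3, (Dd i (b j) x) ^ 2) *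
        ((∑ i : Fin 3, ∑ j : Fin 3, (Dd i (u j) x) ^ 2) +
          ∑ i : Fin 3, ∑ j : Fin 3, (Dd i (b j) x) ^ 2)) := by
    intro x
    set Gx := (∑ i : Fin 3, ∑ j : Fin 3, (Dd i (u j) x) ^ 2) +
      ∑ i : Fin 3, ∑ j : Fin 3, (Dd i (b j) x) ^ 2 with hGx
    have hG0 : 0 ≤ Gx := by rw [hGx]; positivity
    have hSa : (∑ k : Fin 2, ∑ j : Fin 3, (Dd k.castSucc (u j) x) ^ 2) ≤ Gx := by
      refine le_trans (horiz_sum_le (fun k j => Dd k (u j) x)) ?_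
      rw [hGx]; have : (0:ℝ) ≤ ∑ i : Fin 3, ∑ j : Fin 3, (Dd i (b j) x) ^ 2 := by positivity
      linarith
    have hSb : (∑ k : Fin 2, ∑ j : Fin 3, (Dd k.castSucc (b j) x) ^ 2) ≤ Gx := by
      refine le_trans (horiz_sum_le (fun k j => Dd k (b j) x)) ?_
      rw [hGx]; have : (0:ℝ) ≤ ∑ i : Fin 3, ∑ j : Fin 3, (Dd i (u j) x) ^ 2 := by positivity
      linarith
    have h1 : Real.sqrt (∑ k : Fin 2, ∑ j : Fin 3, (Dd k.castSucc (u j) x) ^ 2) ≤ 1 + Gx :=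
      le_trans (sqrt_le_one_add _ (by positivity)) (by linarith)
    have h2 : Real.sqrt (∑ k : Fin 2, ∑ j : Fin 3, (Dd k.castSucc (b j) x) ^ 2) ≤ 1 + Gx :=
      le_trans (sqrt_le_one_add _ (by positivity)) (by linarith)
    have s1 := Real.sqrt_nonneg (∑ k : Fin 2, ∑ j : Fin 3, (Dd k.castSucc (u j) x) ^ 2)
    have s2 := Real.sqrt_nonneg (∑ k : Fin 2, ∑ j : Fin 3, (Dd k.castSucc (b j) x) ^ 2)
    rw [hΦdef]
    simp only [← hGx]
    nlinarith [h1, h2, hG0, s1, s2]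
  have hΦint : Integrable Φ := by
    apply Integrable.mono ((hGint.const_mul 2).add (hGG.const_mul 2))
      contΦ.aestronglyMeasurable
    filter_upwards with x
    rw [Real.norm_eq_abs, Real.norm_eq_abs, abs_of_nonneg (hΦnonneg x)]
    exact le_trans (hΦle x) (le_abs_self _)
  calc ∫ x, R x ≤ ∫ x, 216 * Φ x :=
        integral_mono hRint (hΦint.const_mul 216) hRbound
    _ = 216 * ∫ x, Φ x := integral_const_mul 216 _
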